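/- Let f be an entire function in class 𝒜 and let c be a real number. Then the entire function z ↦ f(z + c) is also in class 𝒜. (In particular, if z ∈ ℂ with |z| > 2|c| and c ∈ ℝ, then |Im(1/(z - c))| ≤ 4 |Im(1/z)|.) -/

import Mathlib

open Filter MeasureTheory Metric Topology Complex Classical

noncomputable section

/-- The order of vanishing (zero multiplicity) of `f` at `z`, as a natural number
(junk value `0` if `f` is not analytic at `z` or vanishes identically near `z`). -/
noncomputable def ordZ (f : ℂ → ℂ) (z : ℂ) : ℕ :=
  if h : AnalyticAt ℂ f z then (analyticOrderAt f z).toNat else 0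

/-- Unintegrated counting function `n(r)` attached to a multiplicity function `w`. -/
noncomputable def countOf (w : ℂ → ℕ) (r : ℝ) : ℝ :=
  ∑' z : Metric.closedBall (0 : ℂ) r, (w (z : ℂ) : ℝ)

/-- Integrated Nevanlinna counting function
`N(r) = ∫_1^r (n(t) - n(0))/t dt + n(0) log r` attached to a multiplicity function `w`. -/
noncomputable def NevNOf (w : ℂ → ℕ) (r : ℝ) : ℝ :=
  (∫ t in Set.Ioc (1 : ℝ) r, (countOf w t - countOf w 0) / t) + countOf w 0 * Real.log r

/-- `N(r, 1/f)` : the integrated counting function of the zeros of `f`. -/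
noncomputable def Nzero (f : ℂ → ℂ) (r : ℝ) : ℝ :=
  NevNOf (ordZ f) r

/-- `log⁺`. -/
noncomputable def logPlus (x : ℝ) : ℝ := Real.log (max x 1)

/-- The Nevanlinna proximity function `m(r, f)`. -/
noncomputable def prox (f : ℂ → ℂ) (r : ℝ) : ℝ :=
  (1 / (2 * Real.pi)) *
    ∫ θ in (0 : ℝ)..(2 * Real.pi),
      logPlus (‖f ((r : ℂ) * Complex.exp ((θ : ℂ) * Complex.I))‖)

/-- The Nevanlinna characteristic `T(r, f) = m(r, f)` of an entire function `f`
(an entire function has no poles, so `N(r, f) = 0`). -/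
noncomputable def Tent (f : ℂ → ℂ) (r : ℝ) : ℝ := prox f r

/-- The Nevanlinna characteristic `T(r, g/h) = m(r, g/h) + N(r, g/h)` of the meromorphic
function `g/h`, where `g, h` are entire; the pole order of `g/h` at `z` is
`max (ord_z h - ord_z g, 0)`. -/
noncomputable def Tratio (g h : ℂ → ℂ) (r : ℝ) : ℝ :=
  prox (fun z => g z / h z) r + NevNOf (fun z => ordZ h z - ordZ g z) r

/-- `T(r) = o(r^k)` as `r → ∞` outside a set of finite (Lebesgue) measure. -/
def SmallOutside (k : ℕ) (T : ℝ → ℝ) : Prop :=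
  ∃ E : Set ℝ, volume E < ⊤ ∧
    Tendsto (fun r => T r / r ^ k) (atTop ⊓ 𝓟 Eᶜ) (𝓝 0)

/-- An entire function belonging to the field `ℳ_k`. -/
def EntireInM (k : ℕ) (f : ℂ → ℂ) : Prop :=
  Differentiable ℂ f ∧ SmallOutside k (Tent f)

/-- The meromorphic function `g/h` (with `g, h` entire) belongs to the field `ℳ_k`. -/
def RatioInM (k : ℕ) (g h : ℂ → ℂ) : Prop :=
  SmallOutside k (Tratio g h)

/-- A sequence is an `A`-sequence if `∑ |Im (1/aₙ)| < ∞` (with `Im (1/0) := 0`,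
which is automatic since `(0 : ℂ)⁻¹ = 0` in Lean). -/
def ASeq (zk : ℕ → ℂ) : Prop :=
  Summable fun k => |((zk k)⁻¹).im|

/-- `f` is in class `𝒜`: `f` is a nonzero entire function whose zero sequence
(with multiplicity) is an `A`-sequence. -/
def ClassA (f : ℂ → ℂ) : Prop :=
  Differentiable ℂ f ∧ f ≠ 0 ∧ Summable fun z : ℂ => (ordZ f z : ℝ) * |(z⁻¹).im|

/-- The functions `f 0, …, f (n-1)` are linearly independent over the field `ℳ_2`:
no nontrivial linear combination with coefficients that are meromorphic functions in `ℳ_2`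
(written as ratios `g i / h i` of entire functions) vanishes identically. -/
def LinIndepM2 {n : ℕ} (f : Fin n → ℂ → ℂ) : Prop :=
  ∀ g h : Fin n → ℂ → ℂ,
    (∀ i, Differentiable ℂ (g i)) → (∀ i, Differentiable ℂ (h i)) →
    (∀ i, h i ≠ 0) → (∀ i, RatioInM 2 (g i) (h i)) →
    (∀ z : ℂ, (∀ i, h i z ≠ 0) → ∑ i, (g i z / h i z) * f i z = 0) →
    ∀ i, g i = 0

/-- The Laguerre–Pólya representation
`f(z) = c z^n ∏_k (1 - z/z_k) e^{t z / z_k} · e^{-α z² + β z}`,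
where the (finite or infinite) zero sequence is encoded as `zk : ℕ → ℂ` with the
convention that entries `zk k = 0` are absent (they contribute a factor `1` to the
product, since `z / 0 = 0` in Lean), together with the convergence condition
`∑_k |z_k|^{-t-1} < ∞`. -/
def LPData (f : ℂ → ℂ) (α β c : ℝ) (n t : ℕ) (zk : ℕ → ℂ) : Prop :=
  c ≠ 0 ∧ t ≤ 1 ∧
  (Summable fun k => ((‖zk k‖)⁻¹) ^ (t + 1)) ∧
  ∀ z : ℂ, f z = (c : ℂ) * z ^ n *
      (∏' k : ℕ, ((1 - z / zk k) * Complex.exp ((t : ℂ) * z / zk k))) *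
      Complex.exp (-(α : ℂ) * z ^ 2 + (β : ℂ) * z)

/-- `f ∈ 𝒜` and `f ∈ LP({zₙ})`, i.e. `f` has a Laguerre–Pólya representation whose zero
sequence is an `A`-sequence. -/
def MemLPA (f : ℂ → ℂ) : Prop :=
  Differentiable ℂ f ∧
    ∃ (α β c : ℝ) (n t : ℕ) (zk : ℕ → ℂ), 0 ≤ α ∧ ASeq zk ∧ LPData f α β c n t zk

/-- `f ∈ LP(A; 2)`: as `MemLPA` with `α > 0`. -/
def MemLPA2 (f : ℂ → ℂ) : Prop :=
  Differentiable ℂ f ∧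
    ∃ (α β c : ℝ) (n t : ℕ) (zk : ℕ → ℂ), 0 < α ∧ ASeq zk ∧ LPData f α β c n t zk

/-- `f ∈ LP_t(A)`: as `MemLPA` with the prescribed value of `t`. -/
def MemLPtA (t : ℕ) (f : ℂ → ℂ) : Prop :=
  Differentiable ℂ f ∧
    ∃ (α β c : ℝ) (n : ℕ) (zk : ℕ → ℂ), 0 ≤ α ∧ ASeq zk ∧ LPData f α β c n t zk

/-- `f ∈ LP_t(A; 2)`: as `MemLPA2` with the prescribed value of `t`. -/
def MemLPtA2 (t : ℕ) (f : ℂ → ℂ) : Prop :=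
  Differentiable ℂ f ∧
    ∃ (α β c : ℝ) (n : ℕ) (zk : ℕ → ℂ), 0 < α ∧ ASeq zk ∧ LPData f α β c n t zk

/-- `f` is in the `A`-type I class: `t = 0`, `α = 0`, `β ≥ 0` and the zero sequence is an
`A`-sequence. -/
def ATypeI (f : ℂ → ℂ) : Prop :=
  Differentiable ℂ f ∧
    ∃ (β c : ℝ) (n : ℕ) (zk : ℕ → ℂ), 0 ≤ β ∧ ASeq zk ∧ LPData f 0 β c n 0 zk

/-- `f ∈ LP(ℝ)`: Laguerre–Pólya representation with real zero sequence. -/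
def MemLPReal (f : ℂ → ℂ) : Prop :=
  Differentiable ℂ f ∧
    ∃ (α β c : ℝ) (n t : ℕ) (zk : ℕ → ℂ), 0 ≤ α ∧ (∀ k, (zk k).im = 0) ∧
      LPData f α β c n t zk

/-- `f ∈ LP(ℝ; 2)`: as `MemLPReal` with `α > 0`. -/
def MemLPReal2 (f : ℂ → ℂ) : Prop :=
  Differentiable ℂ f ∧
    ∃ (α β c : ℝ) (n t : ℕ) (zk : ℕ → ℂ), 0 < α ∧ (∀ k, (zk k).im = 0) ∧
      LPData f α β c n t zk

/-- The order `ρ(f) = limsup_{r→∞} log T(r,f) / log r` of an entire function `f`,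
as an extended real number. -/
noncomputable def rho (f : ℂ → ℂ) : EReal :=
  Filter.limsup (fun r : ℝ => ((Real.log (Tent f r) / Real.log r : ℝ) : EReal)) Filter.atTop

end

private lemma ordZ_shift (f : ℂ → ℂ) (hf : Differentiable ℂ f) (c z : ℂ) :
    ordZ (fun w => f (w + c)) z = ordZ f (z + c) := by
  have hfa : AnalyticAt ℂ f (z + c) := hf.analyticAt _
  have hga : AnalyticAt ℂ (fun w => f (w + c)) z :=
    (hf.comp (differentiable_id.add_const c)).analyticAt z
  have htend : Filter.Tendsto (fun w : ℂ => w + c) (𝓝 z) (𝓝 (z + c)) :=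
    (continuous_id.add continuous_const).tendsto z
  have horder : analyticOrderAt (fun w => f (w + c)) z = analyticOrderAt f (z + c) := by
    by_cases h : analyticOrderAt f (z + c) = ⊤
    · rw [h, analyticOrderAt_eq_top]
      exact htend.eventually (analyticOrderAt_eq_top.mp h)
    · lift analyticOrderAt f (z + c) to ℕ using h with n hn
      rw [hga.analyticOrderAt_eq_natCast]
      obtain ⟨g, hg_an, hg_ne, hg_eq⟩ := (hfa.analyticOrderAt_eq_natCast (n := n)).mp hn.symm
      have hadd : AnalyticAt ℂ (fun w : ℂ => w + c) z := analyticAt_id.add analyticAt_const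
      have hcomp : AnalyticAt ℂ (g ∘ fun w : ℂ => w + c) z := AnalyticAt.comp_of_eq hg_an hadd rfl
      refine ⟨fun w => g (w + c), hcomp, hg_ne, ?_⟩
      filter_upwards [htend.eventually hg_eq] with w hw
      simpa [add_sub_add_right_eq_sub] using hw
  simp only [ordZ, dif_pos hfa, dif_pos hga, horder]

private lemma fzero_of_ordZ_ne_zero (f : ℂ → ℂ) (w : ℂ) (h : ordZ f w ≠ 0) : f w = 0 := by
  by_contra hw
  apply h
  rw [ordZ]
  split_ifs with ha
  · have : analyticOrderAt f w = (0 : ℕ) := (ha.analyticOrderAt_eq_natCast (n := 0)).mpr ⟨f, ha, hw, by simp⟩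
    simp [this]
  · rfl

private lemma zeros_finite (f : ℂ → ℂ) (hf : Differentiable ℂ f) (hne : f ≠ 0) (R : ℝ) :
    {w : ℂ | ‖w‖ ≤ R ∧ f w = 0}.Finite := by
  by_contra hinf
  have hinf' : {w : ℂ | ‖w‖ ≤ R ∧ f w = 0}.Infinite := hinf
  obtain ⟨x, _, hx⟩ := hinf'.exists_accPt_of_subset_isCompact
    (isCompact_closedBall (0 : ℂ) R)
    (fun w hw => by simpa [Complex.dist_eq] using hw.1)
  apply hne
  have hfreq : ∃ᶠ y in 𝓝[≠] x, f y = 0 := by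
    have h1 : ∃ᶠ y in 𝓝 x, y ≠ x ∧ y ∈ {w : ℂ | ‖w‖ ≤ R ∧ f w = 0} :=
      accPt_iff_frequently.mp hx
    rw [frequently_nhdsWithin_iff]
    exact h1.mono fun y hy => ⟨hy.2.2, hy.1⟩
  have := (analyticOnNhd_univ_iff_differentiable.mpr hf).eqOn_zero_of_preconnected_of_frequently_eq_zero
    isPreconnected_univ (Set.mem_univ x) hfreq
  funext w
  exact this (Set.mem_univ w)

private lemma im_inv_bound (c : ℝ) (z : ℂ) (hz : 2 * |c| < ‖z‖) :
    |((z - (c : ℂ))⁻¹).im| ≤ 4 * |(z⁻¹).im| := by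
  have habs : |c| < ‖z‖ / 2 := by linarith
  have hz0 : (0 : ℝ) < ‖z‖ :=
    lt_of_le_of_lt (by positivity) hz
  have hd : ‖z‖ / 2 ≤ ‖z - (c : ℂ)‖ := by
    have h1 : ‖z‖ - ‖(c : ℂ)‖ ≤ ‖z - (c : ℂ)‖ := by
      simpa using norm_sub_norm_le z ((c : ℂ))
    have h2 : ‖(c : ℂ)‖ = |c| := (Complex.norm_real c).trans (Real.norm_eq_abs c)
    linarith
  have hd0 : (0 : ℝ) < ‖z - (c : ℂ)‖ := lt_of_lt_of_le (by linarith) hd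
  have hnsq : Complex.normSq z / 4 ≤ Complex.normSq (z - (c : ℂ)) := by
    have e1 : Complex.normSq z = ‖z‖ ^ 2 := (Complex.sq_norm z).symm
    have e2 : Complex.normSq (z - (c : ℂ)) = ‖z - (c : ℂ)‖ ^ 2 :=
      (Complex.sq_norm _).symm
    rw [e1, e2]
    nlinarith [sq_nonneg (‖z‖)]
  have hnz : (0 : ℝ) < Complex.normSq z := by
    rw [← Complex.sq_norm]; positivity
  have hnd : (0 : ℝ) < Complex.normSq (z - (c : ℂ)) := by
    rw [← Complex.sq_norm]; positivity
  rw [Complex.inv_im, Complex.inv_im]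
  have him : (z - (c : ℂ)).im = z.im := by simp
  rw [him]
  rw [abs_div, abs_div, abs_neg, abs_of_pos hnd, abs_of_pos hnz]
  rw [← mul_div_assoc, div_le_div_iff₀ hnd hnz]
  nlinarith [abs_nonneg z.im]

/-- from the proof of Corollary 1.5(1).
If `f` is in class `𝒜` and `c` is real, then `z ↦ f(z + c)` is also in class `𝒜`.
In particular, if `|z| > 2|c|` then `|Im(1/(z - c))| ≤ 4 |Im(1/z)|`. -/
theorem stmt13 (f : ℂ → ℂ) (hf : ClassA f) (c : ℝ) :
    ClassA (fun z => f (z + (c : ℂ))) ∧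
      ∀ z : ℂ, 2 * |c| < ‖z‖ →
        |((z - (c : ℂ))⁻¹).im| ≤ 4 * |(z⁻¹).im| := by
  obtain ⟨hdiff, hne, hsum⟩ := hf
  refine ⟨⟨hdiff.comp (differentiable_id.add_const _), ?_, ?_⟩,
    fun z hz => im_inv_bound c z hz⟩
  · intro h0
    apply hne
    funext w
    have := congrFun h0 (w - (c : ℂ))
    simpa using this
  · -- summability
    have key : ∀ z : ℂ, (ordZ (fun w => f (w + (c : ℂ))) z : ℝ) * |(z⁻¹).im|
        = (ordZ f (z + (c : ℂ)) : ℝ) * |(z⁻¹).im| := by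
      intro z; rw [ordZ_shift f hdiff]
    rw [show (fun z : ℂ => (ordZ (fun w => f (w + (c : ℂ))) z : ℝ) * |(z⁻¹).im|)
        = fun z : ℂ => (ordZ f (z + (c : ℂ)) : ℝ) * |(z⁻¹).im| from funext key]
    -- reindex: suffices to sum over w = z + c
    have hre : Summable (fun w : ℂ => (ordZ f w : ℝ) * |((w - (c : ℂ))⁻¹).im|) → 
        Summable (fun z : ℂ => (ordZ f (z + (c : ℂ)) : ℝ) * |(z⁻¹).im|) := by
      intro h
      have := (Equiv.addRight ((c : ℂ))).summable_iff.mpr h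
      exact this.congr fun x => by simp
    apply hre
    set g : ℂ → ℝ := fun w => (ordZ f w : ℝ) * |((w - (c : ℂ))⁻¹).im| with hg
    have hgnn : ∀ w, 0 ≤ g w := fun w => mul_nonneg (Nat.cast_nonneg _) (abs_nonneg _)
    set S : Set ℂ := {w : ℂ | 2 * |c| < ‖w‖} with hS
    have h1 : Summable (S.indicator g) := by
      apply Summable.of_nonneg_of_le
        (fun w => Set.indicator_nonneg (fun w _ => hgnn w) w)
        (fun w => ?_) (hsum.mul_left 4)
      by_cases hw : w ∈ S
      · rw [Set.indicator_of_mem hw, hg]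
        have := im_inv_bound c w hw
        calc (ordZ f w : ℝ) * |((w - (c : ℂ))⁻¹).im|
            ≤ (ordZ f w : ℝ) * (4 * |(w⁻¹).im|) :=
              mul_le_mul_of_nonneg_left this (Nat.cast_nonneg _)
          _ = 4 * ((ordZ f w : ℝ) * |(w⁻¹).im|) := by ring
      · rw [Set.indicator_of_notMem hw]
        positivity
    have h2 : Summable (Sᶜ.indicator g) := by
      apply summable_of_finite_support
      have hfin := zeros_finite f hdiff hne (2 * |c|)
      apply Set.Finite.subset hfin
      intro w hw
      rw [Function.mem_support] at hw
      have hwS : w ∈ Sᶜ := by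
        by_contra hcon
        rw [Set.indicator_of_notMem hcon] at hw
        exact hw rfl
      rw [Set.indicator_of_mem hwS] at hw
      have hord : ordZ f w ≠ 0 := by
        intro h0
        apply hw
        rw [hg]
        simp [h0]
      refine ⟨?_, fzero_of_ordZ_ne_zero f w hord⟩
      simpa [hS, not_lt] using hwS
    have hsum2 := h1.add h2
    have heq : (fun b => S.indicator g b + Sᶜ.indicator g b) = g := by
      funext b
      by_cases hb : b ∈ S <;> simp [Set.indicator_apply, hb]
    rwa [heq] at hsum2
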